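/- The exponential correlation matrix H(φ) with entries H_{ij} = exp(-φ·|s_i - s_j|) for φ > 0 and distinct points s_1, ..., s_n on the real line is positive definite. -/

import Mathlib

open MeasureTheory Set

private lemma ind_mul_ind (a b : ℝ) :
    (Ioo (0:ℝ) a).indicator (1 : ℝ → ℝ) * (Ioo (0:ℝ) b).indicator 1
      = (Ioo (0:ℝ) (min a b)).indicator 1 := by
  rw [← Set.inter_indicator_one, Set.Ioo_inter_Ioo, max_self]

private lemma ind_integrable (a : ℝ) :
    Integrable ((Ioo (0:ℝ) a).indicator (1 : ℝ → ℝ)) := by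
  rw [MeasureTheory.integrable_indicator_iff measurableSet_Ioo]
  exact integrableOn_const measure_Ioo_lt_top.ne

private lemma ind_integral (a : ℝ) (ha : 0 ≤ a) :
    ∫ t, (Ioo (0:ℝ) a).indicator (1 : ℝ → ℝ) t = a := by
  rw [Pi.one_def, MeasureTheory.integral_indicator_const (1:ℝ) measurableSet_Ioo]
  simp [Real.volume_Ioo, ENNReal.toReal_ofReal ha, ha]

private lemma minQF {n : ℕ} (g : Fin n → ℝ) (hg : ∀ i, 0 < g i)
    (hginj : Function.Injective g) (y : Fin n → ℝ) (hy : y ≠ 0) :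
    0 < ∑ i, ∑ j, y i * y j * min (g i) (g j) := by
  classical
  set f : Fin n → ℝ → ℝ := fun i t => y i * (Ioo (0:ℝ) (g i)).indicator 1 t with hf
  have hprod : ∀ i j, (fun t => f i t * f j t)
      = fun t => (y i * y j) * (Ioo (0:ℝ) (min (g i) (g j))).indicator 1 t := by
    intro i j
    funext t
    have h := congrFun (ind_mul_ind (g i) (g j)) t
    simp only [Pi.mul_apply] at h
    simp only [hf]
    rw [mul_mul_mul_comm, h]
  have hterm : ∀ i j, Integrable (fun t => f i t * f j t) := by
    intro i j
    rw [hprod i j]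
    exact (ind_integrable _).const_mul _
  have htermval : ∀ i j, (∫ t, f i t * f j t) = y i * y j * min (g i) (g j) := by
    intro i j
    rw [hprod i j, MeasureTheory.integral_const_mul,
      ind_integral _ (le_min (hg i).le (hg j).le)]
  have hFsq : (fun t => (∑ i, f i t) ^ 2)
      = fun t => ∑ i, ∑ j, f i t * f j t := by
    funext t
    rw [sq, Finset.sum_mul_sum]
  have hkey : (∑ i, ∑ j, y i * y j * min (g i) (g j)) = ∫ t, (∑ i, f i t) ^ 2 := by
    rw [hFsq, MeasureTheory.integral_finset_sum _
      (fun i _ => integrable_finset_sum _ fun j _ => hterm i j)]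
    refine Finset.sum_congr rfl fun i _ => ?_
    rw [MeasureTheory.integral_finset_sum _ fun j _ => hterm i j]
    exact Finset.sum_congr rfl fun j _ => (htermval i j).symm
  rw [hkey]
  -- choose i maximizing g on the support of y
  obtain ⟨i₀, hi₀⟩ := Function.ne_iff.1 hy
  replace hi₀ : y i₀ ≠ 0 := by simpa using hi₀
  have hTne : (Finset.univ.filter fun j => y j ≠ 0).Nonempty :=
    ⟨i₀, by simp [hi₀]⟩
  obtain ⟨i, hiT, hmax⟩ := Finset.exists_max_image _ g hTne
  have hyi : y i ≠ 0 := (Finset.mem_filter.1 hiT).2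
  have hne : (Finset.univ : Finset (Fin n)).Nonempty := ⟨i, Finset.mem_univ i⟩
  set a : ℝ := Finset.univ.sup' hne (fun j => if g j < g i then g j else 0) with hadef
  have ha0 : 0 ≤ a := by
    have h := Finset.le_sup' (f := fun j => if g j < g i then g j else 0)
      (Finset.mem_univ i)
    rw [if_neg (lt_irrefl _)] at h
    exact h
  have halt : a < g i := by
    rw [hadef, Finset.sup'_lt_iff]
    intro j _
    split
    · assumption
    · exact hg i
  have hja : ∀ j, g j < g i → g j ≤ a := by
    intro j hj
    have h := Finset.le_sup' (f := fun j => if g j < g i then g j else 0)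
      (Finset.mem_univ j)
    rwa [if_pos hj] at h
  -- on (a, g i), F = y i
  have hFval : ∀ t ∈ Ioo a (g i), (∑ k, f k t) = y i := by
    intro t ht
    have h0t : 0 < t := lt_of_le_of_lt ha0 ht.1
    have hind : ∀ k, (Ioo (0:ℝ) (g k)).indicator (1 : ℝ → ℝ) t
        = if g i ≤ g k then 1 else 0 := by
      intro k
      by_cases h : g i ≤ g k
      · rw [if_pos h,
          Set.indicator_of_mem (Set.mem_Ioo.2 ⟨h0t, lt_of_lt_of_le ht.2 h⟩)]
        rfl
      · push_neg at h
        rw [if_neg (not_le.2 h), Set.indicator_of_notMem]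
        intro hmem
        rw [Set.mem_Ioo] at hmem
        exact absurd hmem.2 (not_lt.2 ((hja k h).trans ht.1.le))
    have hfk : ∀ k, f k t = y k * (if g i ≤ g k then 1 else 0) := by
      intro k
      simp only [hf]
      rw [hind k]
    rw [Finset.sum_congr rfl fun k _ => hfk k, Finset.sum_eq_single i]
    · rw [if_pos le_rfl, mul_one]
    · intro k _ hk
      by_cases h : g i ≤ g k
      · rw [if_pos h, mul_one]
        have hlt : g i < g k := lt_of_le_of_ne h fun e => hk (hginj e.symm)
        by_contra hyk
        exact absurd (hmax k (Finset.mem_filter.2 ⟨Finset.mem_univ _, hyk⟩))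
          (not_le.2 hlt)
      · rw [if_neg h, mul_zero]
    · intro h; exact absurd (Finset.mem_univ i) h
  have hF2int : Integrable (fun t => (∑ i, f i t) ^ 2) := by
    rw [hFsq]
    exact integrable_finset_sum _ fun i _ =>
      integrable_finset_sum _ fun j _ => hterm i j
  have hlow : (y i) ^ 2 * (g i - a) ≤ ∫ t, (∑ i, f i t) ^ 2 := by
    calc (y i) ^ 2 * (g i - a)
        = ∫ t in Ioo a (g i), (y i) ^ 2 := by
          rw [MeasureTheory.setIntegral_const]
          simp [Real.volume_Ioo, ENNReal.toReal_ofReal (by linarith : (0:ℝ) ≤ g i - a),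
            mul_comm, halt.le]
      _ = ∫ t in Ioo a (g i), (∑ k, f k t) ^ 2 := by
          refine (setIntegral_congr_fun measurableSet_Ioo fun t ht => ?_).symm
          rw [hFval t ht]
      _ ≤ ∫ t, (∑ i, f i t) ^ 2 :=
          MeasureTheory.setIntegral_le_integral hF2int
            (Filter.Eventually.of_forall fun t => sq_nonneg _)
  have hysq : 0 < (y i) ^ 2 := by
    have h := pow_pos (abs_pos.2 hyi) 2
    rwa [sq_abs] at h
  have : 0 < (y i) ^ 2 * (g i - a) := mul_pos hysq (by linarith)
  linarith

private lemma exp_abs_decomp (φ a b : ℝ) (hφ : 0 < φ) :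
    Real.exp (-φ * |a - b|) =
      Real.exp (-φ*a) * Real.exp (-φ*b) * min (Real.exp (2*φ*a)) (Real.exp (2*φ*b)) := by
  rcases le_total a b with h | h
  · rw [abs_of_nonpos (by linarith), min_eq_left (Real.exp_le_exp.2 (by nlinarith)),
      ← Real.exp_add, ← Real.exp_add]
    ring_nf
  · rw [abs_of_nonneg (by linarith), min_eq_right (Real.exp_le_exp.2 (by nlinarith)),
      ← Real.exp_add, ← Real.exp_add]
    ring_nf

/-- The exponential correlation matrix H(φ) with entries
H_{ij} = exp(-φ·|s_i - s_j|), for φ > 0 and distinct points s_1,...,s_n on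
the real line, is positive definite. -/
theorem stmt8 (n : ℕ) (s : Fin n → ℝ) (hs : Function.Injective s)
    (φ : ℝ) (hφ : 0 < φ) :
    (Matrix.of fun i j : Fin n => Real.exp (-φ * |s i - s j|)).PosDef := by
  rw [Matrix.posDef_iff_dotProduct_mulVec]
  constructor
  · ext i j
    simp [Matrix.conjTranspose_apply, abs_sub_comm]
  · intro x hx
    set g : Fin n → ℝ := fun i => Real.exp (2*φ*s i) with hg
    set y : Fin n → ℝ := fun i => x i * Real.exp (-φ * s i) with hy
    have hgpos : ∀ i, 0 < g i := fun i => Real.exp_pos _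
    have hginj : Function.Injective g := by
      intro i j h
      apply hs
      have := Real.exp_injective h
      have h2 : (2*φ) ≠ 0 := by positivity
      exact mul_left_cancel₀ h2 this
    have hyne : y ≠ 0 := by
      rw [Function.ne_iff] at hx ⊢
      obtain ⟨i, hi⟩ := hx
      refine ⟨i, ?_⟩
      simp only [hy, Pi.zero_apply] at hi ⊢
      exact mul_ne_zero hi (Real.exp_ne_zero _)
    have hform : dotProduct (star x) ((Matrix.of fun i j : Fin n =>
        Real.exp (-φ * |s i - s j|)).mulVec x)
        = ∑ i, ∑ j, y i * y j * min (g i) (g j) := by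
      simp only [dotProduct, Matrix.mulVec, Matrix.of_apply, Pi.star_apply,
        star_trivial, Finset.mul_sum]
      refine Finset.sum_congr rfl fun i _ => Finset.sum_congr rfl fun j _ => ?_
      rw [exp_abs_decomp φ (s i) (s j) hφ]
      simp only [hy, hg]
      ring
    rw [hform]
    exact minQF g hgpos hginj y hyne
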